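/- Let T be a tree with (T, S) ∈ 𝒯 for some labeling S. Then: (a) a vertex has status C if and only if it is a leaf; (b) a vertex has status A if and only if it is a support vertex; (c) every support vertex has degree two, with one neighbor of status C and one of status B; (d) every vertex of status B has exactly one neighbor of status A and all other neighbors of status B; (e) |S_A| = |S_B| = |S_C|; (f) S_A ∪ S_B is a minimum total dominating set of T. -/

import Mathlib

open SimpleGraph

/-- `S` is a super dominating set of `G`: every vertex `u ∉ S` has some `v ∈ S`
with `N(v) ∩ Sᶜ = {u}`. -/
def SuperDomSet {V : Type} (G : SimpleGraph V) (S : Set V) : Prop :=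
  ∀ u ∈ Sᶜ, ∃ v ∈ S, G.neighborSet v ∩ Sᶜ = {u}

/-- The super domination number `γ_sp(G)`. -/
noncomputable def superDomNum {V : Type} (G : SimpleGraph V) : ℕ :=
  sInf {n | ∃ S : Set V, SuperDomSet G S ∧ S.ncard = n}

/-- `S` is a dominating set of `G`. -/
def DomSet {V : Type} (G : SimpleGraph V) (S : Set V) : Prop :=
  ∀ u ∉ S, ∃ v ∈ S, G.Adj v u

/-- The domination number `γ(G)`. -/
noncomputable def domNum {V : Type} (G : SimpleGraph V) : ℕ :=
  sInf {n | ∃ S : Set V, DomSet G S ∧ S.ncard = n}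

/-- `S` is a total dominating set of `G`: every vertex has a neighbor in `S`. -/
def TotalDomSet {V : Type} (G : SimpleGraph V) (S : Set V) : Prop :=
  ∀ u : V, ∃ v ∈ S, G.Adj v u

/-- The total domination number `γ_t(G)`. -/
noncomputable def totalDomNum {V : Type} (G : SimpleGraph V) : ℕ :=
  sInf {n | ∃ S : Set V, TotalDomSet G S ∧ S.ncard = n}

/-- A leaf is a vertex of degree 1. -/
def IsLeaf {V : Type} (G : SimpleGraph V) (v : V) : Prop :=
  (G.neighborSet v).ncard = 1

/-- A support vertex is a vertex adjacent to a leaf. -/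
def IsSupport {V : Type} (G : SimpleGraph V) (v : V) : Prop :=
  ∃ u, G.Adj v u ∧ IsLeaf G u

/-- Attach a path `u₁u₂u₃u₄u₅u₆` (indices `0,…,5`) to `G` together with the edge
joining `u₃` (index `2`) to `v`. -/
def attachPath6 {V : Type} (G : SimpleGraph V) (v : V) : SimpleGraph (V ⊕ Fin 6) where
  Adj x y :=
    match x, y with
    | Sum.inl a, Sum.inl b => G.Adj a b
    | Sum.inl a, Sum.inr i => a = v ∧ (i : ℕ) = 2
    | Sum.inr i, Sum.inl a => a = v ∧ (i : ℕ) = 2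
    | Sum.inr i, Sum.inr j => (SimpleGraph.pathGraph 6).Adj i j
  symm := by
    constructor
    rintro (a | i) (b | j) h
    · exact h.symm
    · exact h
    · exact h
    · exact (SimpleGraph.pathGraph 6).symm.symm _ _ h
  loopless := by
    constructor
    rintro (a | i) h
    · exact G.loopless.irrefl a h
    · exact (SimpleGraph.pathGraph 6).loopless.irrefl i h

/-- Vertex statuses for labeled trees. -/
inductive Status : Type
  | A | B | C
deriving DecidableEq

/-- The labeling of the (attached or base) path `P₆`: statuses `C,A,B,B,A,C`. -/
def pathLabel : Fin 6 → Status := fun i =>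
  if (i : ℕ) = 0 ∨ (i : ℕ) = 5 then Status.C
  else if (i : ℕ) = 1 ∨ (i : ℕ) = 4 then Status.A
  else Status.B

/-- The family 𝒯 of labeled trees: it contains `(P₆, S₀)` (leaves labeled `C`,
support vertices labeled `A`, middle vertices labeled `B`) and is closed under
operation 𝒪: for a vertex `v` of status `B`, attach a path `u₁…u₆` by the edge
`u₃v`, labeling `u₁,…,u₆` with `C,A,B,B,A,C`. -/
inductive InT : (W : Type) → SimpleGraph W → (W → Status) → Prop
  | base : InT (Fin 6) (SimpleGraph.pathGraph 6) pathLabel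
  | step {W : Type} {G : SimpleGraph W} {L : W → Status} (h : InT W G L)
      (v : W) (hv : L v = Status.B) :
      InT (W ⊕ Fin 6) (attachPath6 G v)
        (fun x => match x with | Sum.inl a => L a | Sum.inr i => pathLabel i)

open Sum

section Helpers

lemma padj0 (j : Fin 6) : (pathGraph 6).Adj 0 j ↔ j = 1 := by
  rw [pathGraph_adj]; revert j; decide
lemma padj1 (j : Fin 6) : (pathGraph 6).Adj 1 j ↔ j = 0 ∨ j = 2 := by
  rw [pathGraph_adj]; revert j; decide
lemma padj2 (j : Fin 6) : (pathGraph 6).Adj 2 j ↔ j = 1 ∨ j = 3 := by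
  rw [pathGraph_adj]; revert j; decide
lemma padj3 (j : Fin 6) : (pathGraph 6).Adj 3 j ↔ j = 2 ∨ j = 4 := by
  rw [pathGraph_adj]; revert j; decide
lemma padj4 (j : Fin 6) : (pathGraph 6).Adj 4 j ↔ j = 3 ∨ j = 5 := by
  rw [pathGraph_adj]; revert j; decide
lemma padj5 (j : Fin 6) : (pathGraph 6).Adj 5 j ↔ j = 4 := by
  rw [pathGraph_adj]; revert j; decide

lemma nbr0 : (pathGraph 6).neighborSet (0:Fin 6) = {1} := by
  ext j; rw [mem_neighborSet, padj0]; simp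
lemma nbr1 : (pathGraph 6).neighborSet (1:Fin 6) = {0, 2} := by
  ext j; rw [mem_neighborSet, padj1]; simp
lemma nbr4 : (pathGraph 6).neighborSet (4:Fin 6) = {5, 3} := by
  ext j; rw [mem_neighborSet, padj4]; simp; tauto
lemma nbr5 : (pathGraph 6).neighborSet (5:Fin 6) = {4} := by
  ext j; rw [mem_neighborSet, padj5]; simp
end Helpers

section H2
variable {W : Type} {G : SimpleGraph W} {v : W}

lemma attach_adj_ll {a b : W} : (attachPath6 G v).Adj (inl a) (inl b) ↔ G.Adj a b := Iff.rfl
lemma attach_adj_lr {a : W} {i : Fin 6} :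
    (attachPath6 G v).Adj (inl a) (inr i) ↔ (a = v ∧ (i : ℕ) = 2) := Iff.rfl
lemma attach_adj_rl {a : W} {i : Fin 6} :
    (attachPath6 G v).Adj (inr i) (inl a) ↔ (a = v ∧ (i : ℕ) = 2) := Iff.rfl
lemma attach_adj_rr {i j : Fin 6} :
    (attachPath6 G v).Adj (inr i) (inr j) ↔ (pathGraph 6).Adj i j := Iff.rfl

lemma attach_nbr_inl {a : W} (hav : a ≠ v) :
    (attachPath6 G v).neighborSet (inl a) = inl '' G.neighborSet a := by
  ext z; rcases z with b | j
  · rw [mem_neighborSet, attach_adj_ll]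
    simp [Set.mem_image]
  · rw [mem_neighborSet, attach_adj_lr]
    simp [hav]

lemma attach_nbr_inr {i : Fin 6} (hi : (i : ℕ) ≠ 2) :
    (attachPath6 G v).neighborSet (inr i) = inr '' (pathGraph 6).neighborSet i := by
  ext z; rcases z with b | j
  · rw [mem_neighborSet, attach_adj_rl]
    simp [hi]
  · rw [mem_neighborSet, attach_adj_rr]
    simp [Set.mem_image]

lemma sum_set_ncard [Finite W] (s : Set W) (t : Set (Fin 6)) :
    (Sum.inl '' s ∪ Sum.inr '' t : Set (W ⊕ Fin 6)).ncard = s.ncard + t.ncard := by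
  rw [Set.ncard_union_eq ?_ (Set.toFinite _) (Set.toFinite _),
    Set.ncard_image_of_injective _ Sum.inl_injective,
    Set.ncard_image_of_injective _ Sum.inr_injective]
  rw [Set.disjoint_left]
  rintro z ⟨a, -, rfl⟩ ⟨i, -, hz⟩
  exact Sum.inr_ne_inl hz

lemma sum_setOf_eq (L : W → Status) (s : Status) :
    {x : W ⊕ Fin 6 | (match x with | Sum.inl a => L a | Sum.inr i => pathLabel i) = s} =
      Sum.inl '' {a | L a = s} ∪ Sum.inr '' {i | pathLabel i = s} := by
  ext z; rcases z with a | i <;> simp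

lemma sum_setOf_or (L : W → Status) (s t : Status) :
    {x : W ⊕ Fin 6 | (match x with | Sum.inl a => L a | Sum.inr i => pathLabel i) = s ∨
        (match x with | Sum.inl a => L a | Sum.inr i => pathLabel i) = t} =
      Sum.inl '' {a | L a = s ∨ L a = t} ∪ Sum.inr '' {i | pathLabel i = s ∨ pathLabel i = t} := by
  ext z; rcases z with a | i <;> simp

lemma pathAB_ncard : {i : Fin 6 | pathLabel i = Status.A ∨ pathLabel i = Status.B}.ncard = 4 := by
  have : {i : Fin 6 | pathLabel i = Status.A ∨ pathLabel i = Status.B} =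
      ↑({1, 2, 3, 4} : Finset (Fin 6)) := by
    ext i
    simp only [Set.mem_setOf_eq, Finset.coe_insert, Set.mem_insert_iff,
      Finset.coe_singleton, Set.mem_singleton_iff]
    revert i; decide
  rw [this, Set.ncard_coe_finset]; decide

end H2


lemma set_pair_ncard : ∀ s : Status, {i : Fin 6 | pathLabel i = s}.ncard = 2 := by
  have hA : {i : Fin 6 | pathLabel i = Status.A} = {1, 4} := by
    ext i; simp only [Set.mem_setOf_eq, Set.mem_insert_iff, Set.mem_singleton_iff]
    revert i; decide
  have hB : {i : Fin 6 | pathLabel i = Status.B} = {2, 3} := by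
    ext i; simp only [Set.mem_setOf_eq, Set.mem_insert_iff, Set.mem_singleton_iff]
    revert i; decide
  have hC : {i : Fin 6 | pathLabel i = Status.C} = {0, 5} := by
    ext i; simp only [Set.mem_setOf_eq, Set.mem_insert_iff, Set.mem_singleton_iff]
    revert i; decide
  rintro (_|_|_)
  · rw [hA]; exact Set.ncard_pair (by decide)
  · rw [hB]; exact Set.ncard_pair (by decide)
  · rw [hC]; exact Set.ncard_pair (by decide)

theorem InT_key {W₀ : Type} {G₀ : SimpleGraph W₀} {L₀ : W₀ → Status} (h : InT W₀ G₀ L₀) :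
    Finite W₀ ∧
    (∀ x, L₀ x = Status.C → ∃ y, G₀.neighborSet x = {y} ∧ L₀ y = Status.A) ∧
    (∀ x, L₀ x = Status.A → ∃ a b, a ≠ b ∧ G₀.neighborSet x = {a, b} ∧
      L₀ a = Status.C ∧ L₀ b = Status.B) ∧
    (∀ x, L₀ x = Status.B → ∃ a b, a ≠ b ∧ G₀.Adj x a ∧ G₀.Adj x b ∧ L₀ a = Status.A ∧
      ∀ c, G₀.Adj x c → c ≠ a → L₀ c = Status.B) ∧
    ({x | L₀ x = Status.A}.ncard = {x | L₀ x = Status.B}.ncard ∧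
      {x | L₀ x = Status.B}.ncard = {x | L₀ x = Status.C}.ncard) ∧
    (∀ D : Set W₀, (∀ u, (L₀ u = Status.A ∨ L₀ u = Status.C) → ∃ d ∈ D, G₀.Adj d u) →
      {x | L₀ x = Status.A ∨ L₀ x = Status.B}.ncard ≤ D.ncard) := by
  induction h with
  | base =>
    refine ⟨inferInstance, ?_, ?_, ?_, ?_, ?_⟩
    · intro x hx
      have hx01 : x = 0 ∨ x = 5 := by revert hx; revert x; decide
      rcases hx01 with rfl | rfl
      · exact ⟨1, nbr0, by decide⟩
      · exact ⟨4, nbr5, by decide⟩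
    · intro x hx
      have hx14 : x = 1 ∨ x = 4 := by revert hx; revert x; decide
      rcases hx14 with rfl | rfl
      · exact ⟨0, 2, by decide, nbr1, by decide, by decide⟩
      · exact ⟨5, 3, by decide, nbr4, by decide, by decide⟩
    · intro x hx
      have hx23 : x = 2 ∨ x = 3 := by revert hx; revert x; decide
      rcases hx23 with rfl | rfl
      · refine ⟨1, 3, by decide, (padj2 1).2 (by decide), (padj2 3).2 (by decide),
          by decide, ?_⟩
        intro c hc hne
        rcases (padj2 c).1 hc with rfl | rfl
        · exact absurd rfl hne
        · decide
      · refine ⟨4, 2, by decide, (padj3 4).2 (by decide), (padj3 2).2 (by decide),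
          by decide, ?_⟩
        intro c hc hne
        rcases (padj3 c).1 hc with rfl | rfl
        · decide
        · exact absurd rfl hne
    · rw [set_pair_ncard, set_pair_ncard, set_pair_ncard]; exact ⟨rfl, rfl⟩
    · intro D hD
      obtain ⟨d1, hd1D, hd1⟩ := hD 0 (Or.inr (by decide))
      obtain ⟨d4, hd4D, hd4⟩ := hD 5 (Or.inr (by decide))
      obtain ⟨d2, hd2D, hd2⟩ := hD 1 (Or.inl (by decide))
      obtain ⟨d5, hd5D, hd5⟩ := hD 4 (Or.inl (by decide))
      rw [(pathGraph 6).adj_comm, padj0] at hd1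
      rw [(pathGraph 6).adj_comm, padj5] at hd4
      rw [(pathGraph 6).adj_comm, padj1] at hd2
      rw [(pathGraph 6).adj_comm, padj4] at hd5
      subst hd1 hd4
      have hsub : ({1, 4, d2, d5} : Set (Fin 6)) ⊆ D := by
        intro x hx
        rcases hx with rfl | rfl | rfl | hx
        · exact hd1D
        · exact hd4D
        · exact hd2D
        · rw [Set.mem_singleton_iff] at hx; subst hx; exact hd5D
      have hAB : {x : Fin 6 | pathLabel x = Status.A ∨ pathLabel x = Status.B} =
          ↑({1, 2, 3, 4} : Finset (Fin 6)) := by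
        ext i
        simp only [Set.mem_setOf_eq, Finset.coe_insert, Set.mem_insert_iff,
          Finset.coe_singleton, Set.mem_singleton_iff]
        revert i; decide
      have h4 : ({1, 4, d2, d5} : Set (Fin 6)).ncard = 4 := by
        rcases hd2 with rfl | rfl <;> rcases hd5 with rfl | rfl
        · rw [show ({1, 4, 0, 3} : Set (Fin 6)) = ↑({1, 4, 0, 3} : Finset (Fin 6)) by simp,
            Set.ncard_coe_finset]; decide
        · rw [show ({1, 4, 0, 5} : Set (Fin 6)) = ↑({1, 4, 0, 5} : Finset (Fin 6)) by simp,
            Set.ncard_coe_finset]; decide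
        · rw [show ({1, 4, 2, 3} : Set (Fin 6)) = ↑({1, 4, 2, 3} : Finset (Fin 6)) by simp,
            Set.ncard_coe_finset]; decide
        · rw [show ({1, 4, 2, 5} : Set (Fin 6)) = ↑({1, 4, 2, 5} : Finset (Fin 6)) by simp,
            Set.ncard_coe_finset]; decide
      calc {x : Fin 6 | pathLabel x = Status.A ∨ pathLabel x = Status.B}.ncard
          = 4 := by rw [hAB, Set.ncard_coe_finset]; decide
        _ = ({1, 4, d2, d5} : Set (Fin 6)).ncard := h4.symm
        _ ≤ D.ncard := Set.ncard_le_ncard hsub (Set.toFinite D)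
  | step h v hv ih =>
    rename_i W G L
    obtain ⟨ihFin, ihC, ihA, ihB, ⟨ihAB, ihBC⟩, ihLB⟩ := ih
    haveI := ihFin
    refine ⟨inferInstance, ?_, ?_, ?_, ?_, ?_⟩
    · -- C part
      rintro (a | i) hx
      · have hx' : L a = Status.C := hx
        obtain ⟨y, hy, hyA⟩ := ihC a hx'
        have hav : a ≠ v := by
          intro he; rw [he, hv] at hx'; exact absurd hx' (by decide)
        refine ⟨inl y, ?_, hyA⟩
        rw [attach_nbr_inl hav, hy]
        simp
      · have hx' : pathLabel i = Status.C := hx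
        clear hx
        have hi : i = 0 ∨ i = 5 := by revert hx'; revert i; decide
        rcases hi with rfl | rfl
        · refine ⟨inr 1, ?_, show pathLabel 1 = Status.A by decide⟩
          rw [attach_nbr_inr (by decide), nbr0]; simp
        · refine ⟨inr 4, ?_, show pathLabel 4 = Status.A by decide⟩
          rw [attach_nbr_inr (by decide), nbr5]; simp
    · -- A part
      rintro (a | i) hx
      · have hx' : L a = Status.A := hx
        obtain ⟨a0, b0, hab, hset, hC0, hB0⟩ := ihA a hx'
        have hav : a ≠ v := by
          intro he; rw [he, hv] at hx'; exact absurd hx' (by decide)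
        refine ⟨inl a0, inl b0, by simpa using hab, ?_, hC0, hB0⟩
        rw [attach_nbr_inl hav, hset]
        simp [Set.image_insert_eq]
      · have hx' : pathLabel i = Status.A := hx
        clear hx
        have hi : i = 1 ∨ i = 4 := by revert hx'; revert i; decide
        rcases hi with rfl | rfl
        · refine ⟨inr 0, inr 2, by simp, ?_, show pathLabel 0 = Status.C by decide,
            show pathLabel 2 = Status.B by decide⟩
          rw [attach_nbr_inr (by decide), nbr1]
          simp [Set.image_insert_eq]
        · refine ⟨inr 5, inr 3, by simp, ?_, show pathLabel 5 = Status.C by decide,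
            show pathLabel 3 = Status.B by decide⟩
          rw [attach_nbr_inr (by decide), nbr4]
          simp [Set.image_insert_eq]
    · -- B part
      rintro (a | i) hx
      · have hx' : L a = Status.B := hx
        obtain ⟨a0, b0, hab, hadj1, hadj2, hA0, hall⟩ := ihB a hx'
        refine ⟨inl a0, inl b0, by simpa using hab, hadj1, hadj2, hA0, ?_⟩
        rintro (c | j) hc hne
        · exact hall c hc (fun hcc => hne (congrArg inl hcc))
        · obtain ⟨-, hj⟩ := (attach_adj_lr).1 hc
          have hj2 : j = 2 := Fin.ext hj
          subst hj2
          show pathLabel 2 = Status.B; decide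
      · have hx' : pathLabel i = Status.B := hx
        clear hx
        have hi : i = 2 ∨ i = 3 := by revert hx'; revert i; decide
        rcases hi with rfl | rfl
        · refine ⟨inr 1, inr 3, by simp, (padj2 1).2 (by decide), (padj2 3).2 (by decide),
            show pathLabel 1 = Status.A by decide, ?_⟩
          rintro (c | j) hc hne
          · obtain ⟨rfl, -⟩ := (attach_adj_rl).1 hc
            exact hv
          · rcases (padj2 j).1 hc with rfl | rfl
            · exact absurd rfl (fun hcc => hne (congrArg inr hcc))
            · show pathLabel 3 = Status.B; decide
        · refine ⟨inr 4, inr 2, by simp, (padj3 4).2 (by decide), (padj3 2).2 (by decide),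
            show pathLabel 4 = Status.A by decide, ?_⟩
          rintro (c | j) hc hne
          · exact absurd ((attach_adj_rl).1 hc).2 (by decide)
          · rcases (padj3 j).1 hc with rfl | rfl
            · show pathLabel 2 = Status.B; decide
            · exact absurd rfl (fun hcc => hne (congrArg inr hcc))
    · -- cardinalities
      refine ⟨?_, ?_⟩
      · show {x : W ⊕ Fin 6 | (match x with | Sum.inl a => L a | Sum.inr i => pathLabel i)
            = Status.A}.ncard = {x : W ⊕ Fin 6 |
            (match x with | Sum.inl a => L a | Sum.inr i => pathLabel i) = Status.B}.ncard
        rw [sum_setOf_eq L Status.A, sum_setOf_eq L Status.B, sum_set_ncard, sum_set_ncard,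
          set_pair_ncard, set_pair_ncard, ihAB]
      · show {x : W ⊕ Fin 6 | (match x with | Sum.inl a => L a | Sum.inr i => pathLabel i)
            = Status.B}.ncard = {x : W ⊕ Fin 6 |
            (match x with | Sum.inl a => L a | Sum.inr i => pathLabel i) = Status.C}.ncard
        rw [sum_setOf_eq L Status.B, sum_setOf_eq L Status.C, sum_set_ncard, sum_set_ncard,
          set_pair_ncard, set_pair_ncard, ihBC]
    · -- lower bound
      intro D hD
      have hDW : ∀ u, (L u = Status.A ∨ L u = Status.C) →
          ∃ d ∈ {a : W | Sum.inl a ∈ D}, G.Adj d u := by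
        intro u hu
        obtain ⟨d, hdD, hadj⟩ := hD (inl u) hu
        rcases d with a | i
        · exact ⟨a, hdD, hadj⟩
        · obtain ⟨huv, -⟩ := (attach_adj_rl).1 hadj
          exfalso
          rcases hu with hu | hu <;> (rw [huv, hv] at hu; exact absurd hu (by decide))
      have h1D : (inr 1 : W ⊕ Fin 6) ∈ D := by
        obtain ⟨d, hdD, hadj⟩ := hD (inr 0) (Or.inr (show pathLabel 0 = Status.C by decide))
        rcases d with a | i
        · exact absurd ((attach_adj_lr).1 hadj).2 (by decide)
        · have hii := (padj0 i).1 ((attach_adj_rr).1 hadj).symm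
          subst hii; exact hdD
      have h4D : (inr 4 : W ⊕ Fin 6) ∈ D := by
        obtain ⟨d, hdD, hadj⟩ := hD (inr 5) (Or.inr (show pathLabel 5 = Status.C by decide))
        rcases d with a | i
        · exact absurd ((attach_adj_lr).1 hadj).2 (by decide)
        · have hii := (padj5 i).1 ((attach_adj_rr).1 hadj).symm
          subst hii; exact hdD
      obtain ⟨d2, hd2D, hd2⟩ := hD (inr 1) (Or.inl (show pathLabel 1 = Status.A by decide))
      obtain ⟨d5, hd5D, hd5⟩ := hD (inr 4) (Or.inl (show pathLabel 4 = Status.A by decide))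
      obtain ⟨i2, rfl, hi2⟩ : ∃ i : Fin 6, d2 = inr i ∧ (i = 0 ∨ i = 2) := by
        rcases d2 with a | i
        · exact absurd ((attach_adj_lr).1 hd2).2 (by decide)
        · exact ⟨i, rfl, (padj1 i).1 ((attach_adj_rr).1 hd2).symm⟩
      obtain ⟨i5, rfl, hi5⟩ : ∃ i : Fin 6, d5 = inr i ∧ (i = 3 ∨ i = 5) := by
        rcases d5 with a | i
        · exact absurd ((attach_adj_lr).1 hd5).2 (by decide)
        · exact ⟨i, rfl, (padj4 i).1 ((attach_adj_rr).1 hd5).symm⟩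
      have hsub : Sum.inl '' {a : W | Sum.inl a ∈ D} ∪
          Sum.inr '' ({1, 4, i2, i5} : Set (Fin 6)) ⊆ D := by
        rintro z (⟨a, ha, rfl⟩ | ⟨j, hj, rfl⟩)
        · exact ha
        · rcases hj with rfl | rfl | rfl | hj
          · exact h1D
          · exact h4D
          · exact hd2D
          · rw [Set.mem_singleton_iff] at hj; subst hj; exact hd5D
      have hfin4 : ({1, 4, i2, i5} : Set (Fin 6)).ncard = 4 := by
        rcases hi2 with rfl | rfl <;> rcases hi5 with rfl | rfl
        · rw [show ({1, 4, 0, 3} : Set (Fin 6)) = ↑({1, 4, 0, 3} : Finset (Fin 6)) by simp,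
            Set.ncard_coe_finset]; decide
        · rw [show ({1, 4, 0, 5} : Set (Fin 6)) = ↑({1, 4, 0, 5} : Finset (Fin 6)) by simp,
            Set.ncard_coe_finset]; decide
        · rw [show ({1, 4, 2, 3} : Set (Fin 6)) = ↑({1, 4, 2, 3} : Finset (Fin 6)) by simp,
            Set.ncard_coe_finset]; decide
        · rw [show ({1, 4, 2, 5} : Set (Fin 6)) = ↑({1, 4, 2, 5} : Finset (Fin 6)) by simp,
            Set.ncard_coe_finset]; decide
      show {x : W ⊕ Fin 6 | (match x with | Sum.inl a => L a | Sum.inr i => pathLabel i)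
          = Status.A ∨
          (match x with | Sum.inl a => L a | Sum.inr i => pathLabel i) = Status.B}.ncard
          ≤ D.ncard
      calc {x : W ⊕ Fin 6 | (match x with | Sum.inl a => L a | Sum.inr i => pathLabel i)
              = Status.A ∨
            (match x with | Sum.inl a => L a | Sum.inr i => pathLabel i) = Status.B}.ncard
          = {a | L a = Status.A ∨ L a = Status.B}.ncard + 4 := by
            rw [sum_setOf_or L Status.A Status.B, sum_set_ncard, pathAB_ncard]
        _ ≤ {a : W | Sum.inl a ∈ D}.ncard + 4 := Nat.add_le_add_right (ihLB _ hDW) 4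
        _ = (Sum.inl '' {a : W | Sum.inl a ∈ D} ∪
              Sum.inr '' ({1, 4, i2, i5} : Set (Fin 6)) : Set (W ⊕ Fin 6)).ncard := by
            rw [sum_set_ncard, hfin4]
        _ ≤ D.ncard := Set.ncard_le_ncard hsub (Set.toFinite D)


/-- Structural properties of the labeled trees `(T, S) ∈ 𝒯`. -/
theorem InT_properties {W : Type} {G : SimpleGraph W} {L : W → Status}
    (h : InT W G L) :
    (∀ x, L x = Status.C ↔ IsLeaf G x) ∧
    (∀ x, L x = Status.A ↔ IsSupport G x) ∧
    (∀ x, IsSupport G x → (G.neighborSet x).ncard = 2 ∧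
      ∃ a b, a ≠ b ∧ G.neighborSet x = {a, b} ∧ L a = Status.C ∧ L b = Status.B) ∧
    (∀ x, L x = Status.B → ∃ a, G.Adj x a ∧ L a = Status.A ∧
      ∀ b, G.Adj x b → b ≠ a → L b = Status.B) ∧
    ({x | L x = Status.A}.ncard = {x | L x = Status.B}.ncard ∧
      {x | L x = Status.B}.ncard = {x | L x = Status.C}.ncard) ∧
    (TotalDomSet G {x | L x = Status.A ∨ L x = Status.B} ∧
      {x | L x = Status.A ∨ L x = Status.B}.ncard = totalDomNum G) := by

  obtain ⟨hFin, keyC, keyA, keyB, hcards, hLB⟩ := InT_key h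
  haveI := hFin
  have hCleaf : ∀ x, L x = Status.C → IsLeaf G x := by
    intro x hx
    obtain ⟨y, hy, -⟩ := keyC x hx
    rw [IsLeaf, hy]
    exact Set.ncard_singleton y
  have hnotleaf : ∀ x, L x ≠ Status.C → ¬ IsLeaf G x := by
    intro x hx hleaf
    cases hLx : L x with
    | A =>
      obtain ⟨a, b, hab, hset, -, -⟩ := keyA x hLx
      rw [IsLeaf, hset, Set.ncard_pair hab] at hleaf
      omega
    | B =>
      obtain ⟨a, b, hab, h1, h2, -, -⟩ := keyB x hLx
      have h2' : 1 < (G.neighborSet x).ncard :=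
        (Set.one_lt_ncard_iff (Set.toFinite _)).2 ⟨a, b, h1, h2, hab⟩
      rw [IsLeaf] at hleaf
      omega
    | C => exact hx hLx
  have hleafC : ∀ x, IsLeaf G x → L x = Status.C := by
    intro x hx
    by_contra hne
    exact hnotleaf x hne hx
  have hAsupp : ∀ x, L x = Status.A → IsSupport G x := by
    intro x hx
    obtain ⟨a, b, hab, hset, hC, hB⟩ := keyA x hx
    have hadj : G.Adj x a := (G.mem_neighborSet x a).1 (by rw [hset]; exact Set.mem_insert a _)
    exact ⟨a, hadj, hCleaf a hC⟩
  have hsuppA : ∀ x, IsSupport G x → L x = Status.A := by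
    rintro x ⟨u, hadj, hu⟩
    have huC : L u = Status.C := hleafC u hu
    obtain ⟨y, hy, hyA⟩ := keyC u huC
    have hxy : x ∈ G.neighborSet u := (G.mem_neighborSet u x).2 hadj.symm
    rw [hy, Set.mem_singleton_iff] at hxy
    subst hxy
    exact hyA
  have hTDS : TotalDomSet G {x | L x = Status.A ∨ L x = Status.B} := by
    intro u
    cases hLu : L u with
    | A =>
      obtain ⟨a, b, hab, hset, hC, hB⟩ := keyA u hLu
      have hadj : G.Adj u b := (G.mem_neighborSet u b).1
        (by rw [hset]; exact Set.mem_insert_of_mem _ rfl)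
      exact ⟨b, Or.inr hB, hadj.symm⟩
    | B =>
      obtain ⟨a, b, hab, h1, h2, hA, -⟩ := keyB u hLu
      exact ⟨a, Or.inl hA, h1.symm⟩
    | C =>
      obtain ⟨y, hy, hyA⟩ := keyC u hLu
      have hadj : G.Adj u y := (G.mem_neighborSet u y).1 (by rw [hy]; rfl)
      exact ⟨y, Or.inl hyA, hadj.symm⟩
  refine ⟨fun x => ⟨hCleaf x, hleafC x⟩, fun x => ⟨hAsupp x, hsuppA x⟩, ?_, ?_, hcards,
    hTDS, ?_⟩
  · intro x hsupp
    have hx := hsuppA x hsupp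
    obtain ⟨a, b, hab, hset, hC, hB⟩ := keyA x hx
    exact ⟨by rw [hset]; exact Set.ncard_pair hab, a, b, hab, hset, hC, hB⟩
  · intro x hx
    obtain ⟨a, b, hab, h1, h2, hA, hall⟩ := keyB x hx
    exact ⟨a, h1, hA, hall⟩
  · refine le_antisymm ?_ (Nat.sInf_le ⟨_, hTDS, rfl⟩)
    refine le_csInf ⟨_, _, hTDS, rfl⟩ ?_
    rintro n ⟨D, hDtd, rfl⟩
    exact hLB D (fun u _ => hDtd u)
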